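/- Let φ₁₂ be the (1,2) entry of the fundamental matrix of w' = A(y)w with A = [[0,1],[2r/σ², −2α/σ²]] on I, and assume φ₁₂(a,x) > 0 for all x ∈ (a,b] where [a,b] ⊂ I is compact. Then for the two-point boundary problem on [a, b−ε] (ε ∈ (0, b−a)) with non-negative data g (g/σ² locally integrable, g not a.e. zero on [a,b']) the solution v_ε(x) = (∫ₐ^{b−ε}(2g/σ²)φ₁₂(z,b−ε)dz / φ₁₂(a,b−ε)) φ₁₂(a,x) − ∫ₐˣ(2g/σ²)φ₁₂(z,x)dz satisfies: if φ₁₂(a,b) = 0 and ∫ₐᵇ g(z)φ₁₂(z,b)/σ(z)² dz > 0, then lim_{ε→0⁺} v_ε(x) = +∞ for every x ∈ (a,b). -/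

import Mathlib

open MeasureTheory Set Filter

lemma gw_fwd (p q C : ℝ) (hpq : p ≤ q) (hC : 0 ≤ C) (ρ m : ℝ → ℝ)
    (hρint : IntegrableOn ρ (Set.Icc p q))
    (hρ0 : ∀ t, 0 ≤ ρ t)
    (hm : ContinuousOn m (Set.Icc p q))
    (hm0 : ∀ t ∈ Set.Icc p q, 0 ≤ m t)
    (hineq : ∀ t ∈ Set.Icc p q, m t ≤ C + ∫ s in Set.Ioc p t, ρ s * m s)
    (n : ℕ) (hn : (∫ s in Set.Ioc p q, ρ s) ≤ n / 2) :
    ∀ t ∈ Set.Icc p q, m t ≤ C * 3 ^ n := by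
  obtain ⟨M₀, hM₀⟩ : ∃ M₀, ∀ t ∈ Set.Icc p q, ‖m t‖ ≤ M₀ :=
    isCompact_Icc.exists_bound_of_continuousOn hm
  have hρm : IntegrableOn (fun s => ρ s * m s) (Set.Icc p q) := by
    refine Integrable.mono' (hρint.abs.const_mul M₀)
      (hρint.aestronglyMeasurable.mul (hm.aestronglyMeasurable measurableSet_Icc)) ?_
    filter_upwards [ae_restrict_mem measurableSet_Icc] with t ht
    have h1 : ‖ρ t * m t‖ = ρ t * ‖m t‖ := by
      rw [norm_mul, Real.norm_of_nonneg (hρ0 t)]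
    rw [h1]
    calc ρ t * ‖m t‖ ≤ ρ t * M₀ := mul_le_mul_of_nonneg_left (hM₀ t ht) (hρ0 t)
      _ = M₀ * |ρ t| := by rw [abs_of_nonneg (hρ0 t)]; ring
  have hρmsub : ∀ s t, p ≤ s → t ≤ q → IntegrableOn (fun s => ρ s * m s) (Set.Ioc s t) :=
    fun s t hs ht => hρm.mono_set (fun x hx => ⟨hs.trans hx.1.le, hx.2.trans ht⟩)
  have hρsub : ∀ s t, p ≤ s → t ≤ q → IntegrableOn ρ (Set.Ioc s t) :=
    fun s t hs ht => hρint.mono_set (fun x hx => ⟨hs.trans hx.1.le, hx.2.trans ht⟩)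
  set F : ℝ → ℝ := fun t => ∫ s in Set.Ioc p t, ρ s with hF
  have hFcont : ContinuousOn F (Set.Icc p q) :=
    intervalIntegral.continuousOn_primitive hρint
  have hFmono : ∀ s t, p ≤ s → s ≤ t → t ≤ q → F s ≤ F t := fun s t hs hst htq =>
    setIntegral_mono_set (hρsub p t le_rfl htq)
      (Eventually.of_forall fun x => hρ0 x)
      ((Set.Ioc_subset_Ioc le_rfl hst).eventuallyLE)
  have hFsplit : ∀ s t, p ≤ s → s ≤ t → t ≤ q →
      F t = F s + ∫ x in Set.Ioc s t, ρ x := by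
    intro s t hs hst htq
    rw [hF]
    simp only
    rw [← setIntegral_union (Set.Ioc_disjoint_Ioc_of_le le_rfl) measurableSet_Ioc
      (hρsub p s le_rfl (hst.trans htq)) (hρsub s t hs htq),
      Set.Ioc_union_Ioc_eq_Ioc hs hst]
  have hρmsplit : ∀ s t, p ≤ s → s ≤ t → t ≤ q →
      (∫ x in Set.Ioc p t, ρ x * m x) =
        (∫ x in Set.Ioc p s, ρ x * m x) + ∫ x in Set.Ioc s t, ρ x * m x := by
    intro s t hs hst htq
    rw [← setIntegral_union (Set.Ioc_disjoint_Ioc_of_le le_rfl) measurableSet_Ioc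
      (hρmsub p s le_rfl (hst.trans htq)) (hρmsub s t hs htq),
      Set.Ioc_union_Ioc_eq_Ioc hs hst]
  have key : ∀ n : ℕ, ∀ t ∈ Set.Icc p q, F t ≤ n / 2 →
      C + (∫ s in Set.Ioc p t, ρ s * m s) ≤ C * 3 ^ n := by
    intro n
    induction n with
    | zero =>
      intro t ht hFt
      have h0 : F t = 0 := le_antisymm (by simpa using hFt)
        (setIntegral_nonneg measurableSet_Ioc (fun x _ => hρ0 x))
      have hae : ρ =ᵐ[volume.restrict (Set.Ioc p t)] 0 :=
        (integral_eq_zero_iff_of_nonneg (fun x => hρ0 x)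
          (hρsub p t le_rfl ht.2)).mp h0
      have hae2 : (fun s => ρ s * m s) =ᵐ[volume.restrict (Set.Ioc p t)] (fun _ => 0) := by
        filter_upwards [hae] with x hx
        have : ρ x = 0 := hx
        simp [this]
      have hz : (∫ s in Set.Ioc p t, ρ s * m s) = 0 := by
        rw [integral_congr_ae hae2]; simp
      simp [hz]
    | succ n ih =>
      intro t ht hFt
      by_cases hc : F t ≤ n / 2
      · calc C + (∫ s in Set.Ioc p t, ρ s * m s) ≤ C * 3 ^ n := ih t ht hc
          _ ≤ C * 3 ^ (n + 1) :=
            mul_le_mul_of_nonneg_left (pow_le_pow_right₀ (by norm_num) (Nat.le_succ n)) hC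
      push_neg at hc
      have hFp : F p = 0 := by simp [hF]
      obtain ⟨s, hs, hFs⟩ : ∃ s ∈ Set.Icc p t, F s = n / 2 := by
        have := intermediate_value_Icc ht.1 (hFcont.mono (Set.Icc_subset_Icc le_rfl ht.2))
        have hmem : (n / 2 : ℝ) ∈ Set.Icc (F p) (F t) :=
          ⟨by rw [hFp]; positivity, hc.le⟩
        obtain ⟨s, hs1, hs2⟩ := this hmem
        exact ⟨s, hs1, hs2⟩
      have hsq : s ∈ Set.Icc p q := ⟨hs.1, hs.2.trans ht.2⟩
      have ihs : C + (∫ x in Set.Ioc p s, ρ x * m x) ≤ C * 3 ^ n := ih s hsq hFs.le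
      obtain ⟨tm, htm, hmax⟩ :=
        isCompact_Icc.exists_isMaxOn (Set.nonempty_Icc.2 hs.2)
          (hm.mono (Set.Icc_subset_Icc hs.1 ht.2))
      set M' := m tm with hM'
      have hM'0 : 0 ≤ M' := hm0 tm ⟨hs.1.trans htm.1, htm.2.trans ht.2⟩
      have claim2 : ∀ t' ∈ Set.Icc s t, (∫ x in Set.Ioc s t', ρ x * m x) ≤ M' / 2 := by
        intro t' ht'
        have ht'q : t' ≤ q := ht'.2.trans ht.2
        have step1 : (∫ x in Set.Ioc s t', ρ x * m x) ≤ ∫ x in Set.Ioc s t', ρ x * M' := by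
          apply setIntegral_mono_on (hρmsub s t' hs.1 ht'q)
            ((hρsub s t' hs.1 ht'q).mul_const M') measurableSet_Ioc
          intro x hx
          exact mul_le_mul_of_nonneg_left
            (hmax (⟨hx.1.le, hx.2.trans ht'.2⟩ : x ∈ Set.Icc s t)) (hρ0 x)
        have step2 : (∫ x in Set.Ioc s t', ρ x * M') = (F t' - F s) * M' := by
          rw [integral_mul_const]
          congr 1
          have := hFsplit s t' hs.1 ht'.1 ht'q
          linarith
        have step3 : F t' - F s ≤ 1 / 2 := by
          have h1 : F t' ≤ F t := hFmono t' t (hs.1.trans ht'.1) ht'.2 ht.2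
          have : (n : ℝ) + 1 = (n + 1 : ℕ) := by push_cast; ring
          rw [hFs]
          have h2 : F t ≤ ((n : ℝ) + 1) / 2 := by
            rw [this]; exact_mod_cast hFt
          linarith
        calc (∫ x in Set.Ioc s t', ρ x * m x) ≤ (F t' - F s) * M' := step1.trans_eq step2
          _ ≤ (1 / 2) * M' := mul_le_mul_of_nonneg_right step3 hM'0
          _ = M' / 2 := by ring
      have hMle : M' ≤ 2 * (C * 3 ^ n) := by
        have h1 : m tm ≤ C + ∫ x in Set.Ioc p tm, ρ x * m x :=
          hineq tm ⟨hs.1.trans htm.1, htm.2.trans ht.2⟩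
        have h2 := hρmsplit s tm hs.1 htm.1 (htm.2.trans ht.2)
        have h3 := claim2 tm htm
        rw [← hM'] at h1
        rw [h2] at h1
        linarith
      have hfin := claim2 t ⟨hs.2, le_rfl⟩
      have h4 := hρmsplit s t hs.1 hs.2 ht.2
      have : C + (∫ x in Set.Ioc p t, ρ x * m x) ≤ 2 * (C * 3 ^ n) := by
        rw [h4]; linarith
      calc C + (∫ x in Set.Ioc p t, ρ x * m x) ≤ 2 * (C * 3 ^ n) := this
        _ ≤ C * 3 ^ (n + 1) := by rw [pow_succ]; nlinarith [pow_nonneg (by norm_num : (0:ℝ) ≤ 3) n]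
  intro t ht
  have hFt : F t ≤ n / 2 := le_trans (hFmono t q ht.1 ht.2 le_rfl) hn
  calc m t ≤ C + ∫ s in Set.Ioc p t, ρ s * m s := hineq t ht
    _ ≤ C * 3 ^ n := key n t ht hFt

lemma gw_bwd (p q C : ℝ) (hpq : p ≤ q) (hC : 0 ≤ C) (ρ m : ℝ → ℝ)
    (hρint : IntegrableOn ρ (Set.Icc p q))
    (hρ0 : ∀ t, 0 ≤ ρ t)
    (hm : ContinuousOn m (Set.Icc p q))
    (hm0 : ∀ t ∈ Set.Icc p q, 0 ≤ m t)
    (hineq : ∀ t ∈ Set.Icc p q, m t ≤ C + ∫ s in Set.Ioc t q, ρ s * m s)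
    (n : ℕ) (hn : (∫ s in Set.Ioc p q, ρ s) ≤ n / 2) :
    ∀ t ∈ Set.Icc p q, m t ≤ C * 3 ^ n := by
  obtain ⟨M₀, hM₀⟩ : ∃ M₀, ∀ t ∈ Set.Icc p q, ‖m t‖ ≤ M₀ :=
    isCompact_Icc.exists_bound_of_continuousOn hm
  have hρm : IntegrableOn (fun s => ρ s * m s) (Set.Icc p q) := by
    refine Integrable.mono' (hρint.abs.const_mul M₀)
      (hρint.aestronglyMeasurable.mul (hm.aestronglyMeasurable measurableSet_Icc)) ?_
    filter_upwards [ae_restrict_mem measurableSet_Icc] with t ht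
    have h1 : ‖ρ t * m t‖ = ρ t * ‖m t‖ := by
      rw [norm_mul, Real.norm_of_nonneg (hρ0 t)]
    rw [h1]
    calc ρ t * ‖m t‖ ≤ ρ t * M₀ := mul_le_mul_of_nonneg_left (hM₀ t ht) (hρ0 t)
      _ = M₀ * |ρ t| := by rw [abs_of_nonneg (hρ0 t)]; ring
  have hρmsub : ∀ s t, p ≤ s → t ≤ q → IntegrableOn (fun s => ρ s * m s) (Set.Ioc s t) :=
    fun s t hs ht => hρm.mono_set (fun x hx => ⟨hs.trans hx.1.le, hx.2.trans ht⟩)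
  have hρsub : ∀ s t, p ≤ s → t ≤ q → IntegrableOn ρ (Set.Ioc s t) :=
    fun s t hs ht => hρint.mono_set (fun x hx => ⟨hs.trans hx.1.le, hx.2.trans ht⟩)
  set G : ℝ → ℝ := fun t => ∫ s in Set.Ioc t q, ρ s with hG
  have hGsplit : ∀ s t, p ≤ s → s ≤ t → t ≤ q →
      G s = (∫ x in Set.Ioc s t, ρ x) + G t := by
    intro s t hs hst htq
    rw [hG]
    simp only
    rw [← setIntegral_union (Set.Ioc_disjoint_Ioc_of_le le_rfl) measurableSet_Ioc
      (hρsub s t hs htq) (hρsub t q (hs.trans hst) le_rfl),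
      Set.Ioc_union_Ioc_eq_Ioc hst htq]
  have hGcont : ContinuousOn G (Set.Icc p q) := by
    have hFcont : ContinuousOn (fun t => ∫ s in Set.Ioc p t, ρ s) (Set.Icc p q) :=
      intervalIntegral.continuousOn_primitive hρint
    have : ∀ t ∈ Set.Icc p q, G t = (∫ s in Set.Ioc p q, ρ s) - ∫ s in Set.Ioc p t, ρ s := by
      intro t ht
      have h1 : G p = (∫ x in Set.Ioc p t, ρ x) + G t := hGsplit p t le_rfl ht.1 ht.2
      have h2 : G p = ∫ s in Set.Ioc p q, ρ s := by rw [hG]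
      linarith
    exact (continuousOn_const.sub hFcont).congr this
  have hGanti : ∀ s t, p ≤ s → s ≤ t → t ≤ q → G t ≤ G s := by
    intro s t hs hst htq
    have := hGsplit s t hs hst htq
    have h2 : 0 ≤ ∫ x in Set.Ioc s t, ρ x :=
      setIntegral_nonneg measurableSet_Ioc (fun x _ => hρ0 x)
    linarith
  have hρmsplit : ∀ s t, p ≤ s → s ≤ t → t ≤ q →
      (∫ x in Set.Ioc s q, ρ x * m x) =
        (∫ x in Set.Ioc s t, ρ x * m x) + ∫ x in Set.Ioc t q, ρ x * m x := by
    intro s t hs hst htq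
    rw [← setIntegral_union (Set.Ioc_disjoint_Ioc_of_le le_rfl) measurableSet_Ioc
      (hρmsub s t hs htq) (hρmsub t q (hs.trans hst) le_rfl),
      Set.Ioc_union_Ioc_eq_Ioc hst htq]
  have key : ∀ n : ℕ, ∀ t ∈ Set.Icc p q, G t ≤ n / 2 →
      C + (∫ s in Set.Ioc t q, ρ s * m s) ≤ C * 3 ^ n := by
    intro n
    induction n with
    | zero =>
      intro t ht hGt
      have h0 : G t = 0 := le_antisymm (by simpa using hGt)
        (setIntegral_nonneg measurableSet_Ioc (fun x _ => hρ0 x))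
      have hae : ρ =ᵐ[volume.restrict (Set.Ioc t q)] 0 :=
        (integral_eq_zero_iff_of_nonneg (fun x => hρ0 x)
          (hρsub t q ht.1 le_rfl)).mp h0
      have hae2 : (fun s => ρ s * m s) =ᵐ[volume.restrict (Set.Ioc t q)] (fun _ => 0) := by
        filter_upwards [hae] with x hx
        have : ρ x = 0 := hx
        simp [this]
      have hz : (∫ s in Set.Ioc t q, ρ s * m s) = 0 := by
        rw [integral_congr_ae hae2]; simp
      simp [hz]
    | succ n ih =>
      intro t ht hGt
      by_cases hc : G t ≤ n / 2
      · calc C + (∫ s in Set.Ioc t q, ρ s * m s) ≤ C * 3 ^ n := ih t ht hc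
          _ ≤ C * 3 ^ (n + 1) :=
            mul_le_mul_of_nonneg_left (pow_le_pow_right₀ (by norm_num) (Nat.le_succ n)) hC
      push_neg at hc
      have hGq : G q = 0 := by simp [hG]
      obtain ⟨s, hs, hGs⟩ : ∃ s ∈ Set.Icc t q, G s = n / 2 := by
        have := intermediate_value_Icc' ht.2 (hGcont.mono (Set.Icc_subset_Icc ht.1 le_rfl))
        have hmem : (n / 2 : ℝ) ∈ Set.Icc (G q) (G t) :=
          ⟨by rw [hGq]; positivity, hc.le⟩
        obtain ⟨s, hs1, hs2⟩ := this hmem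
        exact ⟨s, hs1, hs2⟩
      have hsq : s ∈ Set.Icc p q := ⟨ht.1.trans hs.1, hs.2⟩
      have ihs : C + (∫ x in Set.Ioc s q, ρ x * m x) ≤ C * 3 ^ n := ih s hsq hGs.le
      obtain ⟨tm, htm, hmax⟩ :=
        isCompact_Icc.exists_isMaxOn (Set.nonempty_Icc.2 hs.1)
          (hm.mono (Set.Icc_subset_Icc ht.1 hs.2))
      set M' := m tm with hM'
      have hM'0 : 0 ≤ M' := hm0 tm ⟨ht.1.trans htm.1, htm.2.trans hs.2⟩
      have claim2 : ∀ t' ∈ Set.Icc t s, (∫ x in Set.Ioc t' s, ρ x * m x) ≤ M' / 2 := by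
        intro t' ht'
        have hpt' : p ≤ t' := ht.1.trans ht'.1
        have step1 : (∫ x in Set.Ioc t' s, ρ x * m x) ≤ ∫ x in Set.Ioc t' s, ρ x * M' := by
          apply setIntegral_mono_on (hρmsub t' s hpt' hs.2)
            ((hρsub t' s hpt' hs.2).mul_const M') measurableSet_Ioc
          intro x hx
          exact mul_le_mul_of_nonneg_left
            (hmax (⟨ht'.1.trans hx.1.le, hx.2⟩ : x ∈ Set.Icc t s)) (hρ0 x)
        have step2 : (∫ x in Set.Ioc t' s, ρ x * M') = (G t' - G s) * M' := by
          rw [integral_mul_const]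
          congr 1
          have := hGsplit t' s hpt' ht'.2 hs.2
          linarith
        have step3 : G t' - G s ≤ 1 / 2 := by
          have h1 : G t' ≤ G t := hGanti t t' ht.1 ht'.1 (ht'.2.trans hs.2)
          have hcast : (n : ℝ) + 1 = (n + 1 : ℕ) := by push_cast; ring
          rw [hGs]
          have h2 : G t ≤ ((n : ℝ) + 1) / 2 := by
            rw [hcast]; exact_mod_cast hGt
          linarith
        calc (∫ x in Set.Ioc t' s, ρ x * m x) ≤ (G t' - G s) * M' := step1.trans_eq step2
          _ ≤ (1 / 2) * M' := mul_le_mul_of_nonneg_right step3 hM'0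
          _ = M' / 2 := by ring
      have hMle : M' ≤ 2 * (C * 3 ^ n) := by
        have h1 : m tm ≤ C + ∫ x in Set.Ioc tm q, ρ x * m x :=
          hineq tm ⟨ht.1.trans htm.1, htm.2.trans hs.2⟩
        have h2 := hρmsplit tm s (ht.1.trans htm.1) htm.2 hs.2
        have h3 := claim2 tm htm
        rw [← hM'] at h1
        rw [h2] at h1
        linarith
      have hfin := claim2 t ⟨le_rfl, hs.1⟩
      have h4 := hρmsplit t s ht.1 hs.1 hs.2
      have hlast : C + (∫ x in Set.Ioc t q, ρ x * m x) ≤ 2 * (C * 3 ^ n) := by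
        rw [h4]; linarith
      calc C + (∫ x in Set.Ioc t q, ρ x * m x) ≤ 2 * (C * 3 ^ n) := hlast
        _ ≤ C * 3 ^ (n + 1) := by rw [pow_succ]; nlinarith [pow_nonneg (by norm_num : (0:ℝ) ≤ 3) n]
  intro t ht
  have hGt : G t ≤ n / 2 := le_trans (hGanti p t le_rfl ht.1 ht.2) (by simpa using hn)
  calc m t ≤ C + ∫ s in Set.Ioc t q, ρ s * m s := hineq t ht
    _ ≤ C * 3 ^ n := key n t ht hGt
lemma rho_mul_int (p q : ℝ) (ρ m : ℝ → ℝ) (hρ : IntegrableOn ρ (Set.Icc p q))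
    (hρ0 : ∀ t, 0 ≤ ρ t) (hm : ContinuousOn m (Set.Icc p q)) :
    IntegrableOn (fun s => ρ s * m s) (Set.Icc p q) := by
  obtain ⟨M₀, hM₀⟩ : ∃ M₀, ∀ t ∈ Set.Icc p q, ‖m t‖ ≤ M₀ :=
    isCompact_Icc.exists_bound_of_continuousOn hm
  refine Integrable.mono' (hρ.abs.const_mul M₀)
    (hρ.aestronglyMeasurable.mul (hm.aestronglyMeasurable measurableSet_Icc)) ?_
  filter_upwards [ae_restrict_mem measurableSet_Icc] with t ht
  have h1 : ‖ρ t * m t‖ = ρ t * ‖m t‖ := by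
    rw [norm_mul, Real.norm_of_nonneg (hρ0 t)]
  rw [h1]
  calc ρ t * ‖m t‖ ≤ ρ t * M₀ := mul_le_mul_of_nonneg_left (hM₀ t ht) (hρ0 t)
    _ = M₀ * |ρ t| := by rw [abs_of_nonneg (hρ0 t)]; ring

lemma uniq_fwd (p q : ℝ) (r α σ : ℝ → ℝ) (hpq : p ≤ q)
    (hρint : IntegrableOn (fun t => 1 + |2 * r t / σ t ^ 2| + |2 * α t / σ t ^ 2|) (Set.Icc p q))
    (n : ℕ)
    (hn : (∫ s in Set.Ioc p q, (1 + |2 * r s / σ s ^ 2| + |2 * α s / σ s ^ 2|)) ≤ (n : ℝ) / 2)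
    (d₁ d₂ : ℝ → ℝ)
    (hd₁ : ContinuousOn d₁ (Set.Icc p q)) (hd₂ : ContinuousOn d₂ (Set.Icc p q))
    (hwint : IntegrableOn (fun t => 2 * r t / σ t ^ 2 * d₁ t - 2 * α t / σ t ^ 2 * d₂ t)
      (Set.Ioc p q))
    (heq₁ : ∀ t ∈ Set.Icc p q, d₁ t = ∫ s in Set.Ioc p t, d₂ s)
    (heq₂ : ∀ t ∈ Set.Icc p q, d₂ t =
      ∫ s in Set.Ioc p t, (2 * r s / σ s ^ 2 * d₁ s - 2 * α s / σ s ^ 2 * d₂ s)) :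
    ∀ t ∈ Set.Icc p q, d₁ t = 0 ∧ d₂ t = 0 := by
  set ρ : ℝ → ℝ := fun t => 1 + |2 * r t / σ t ^ 2| + |2 * α t / σ t ^ 2| with hρdef
  set w : ℝ → ℝ := fun t => 2 * r t / σ t ^ 2 * d₁ t - 2 * α t / σ t ^ 2 * d₂ t with hwdef
  set m : ℝ → ℝ := fun t => |d₁ t| + |d₂ t| with hmdef
  have hρ0 : ∀ t, 0 ≤ ρ t := fun t => by rw [hρdef]; positivity
  have hwpt : ∀ t, |w t| ≤ (ρ t - 1) * m t := by
    intro t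
    rw [hwdef, hρdef, hmdef]
    simp only
    have h1 : |2 * r t / σ t ^ 2 * d₁ t - 2 * α t / σ t ^ 2 * d₂ t| ≤
        |2 * r t / σ t ^ 2 * d₁ t| + |2 * α t / σ t ^ 2 * d₂ t| := abs_sub _ _
    rw [abs_mul, abs_mul] at h1
    nlinarith [abs_nonneg (d₁ t), abs_nonneg (d₂ t),
      abs_nonneg (2 * r t / σ t ^ 2), abs_nonneg (2 * α t / σ t ^ 2)]
  have hmcont : ContinuousOn m (Set.Icc p q) := hd₁.abs.add hd₂.abs
  have hρm : IntegrableOn (fun s => ρ s * m s) (Set.Icc p q) :=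
    rho_mul_int p q ρ m hρint hρ0 hmcont
  have hineq : ∀ t ∈ Set.Icc p q, m t ≤ 0 + ∫ s in Set.Ioc p t, ρ s * m s := by
    intro t ht
    have hd₂int : IntegrableOn d₂ (Set.Ioc p t) :=
      (hd₂.integrableOn_Icc).mono_set
        (fun x hx => ⟨hx.1.le, hx.2.trans ht.2⟩)
    have hwq : IntegrableOn w (Set.Ioc p t) :=
      hwint.mono_set (Set.Ioc_subset_Ioc le_rfl ht.2)
    have h1 : |d₁ t| ≤ ∫ s in Set.Ioc p t, |d₂ s| := by
      rw [heq₁ t ht]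
      have h := norm_integral_le_integral_norm (μ := volume.restrict (Set.Ioc p t)) d₂
      simpa [Real.norm_eq_abs] using h
    have h2 : |d₂ t| ≤ ∫ s in Set.Ioc p t, |w s| := by
      rw [heq₂ t ht]
      have h := norm_integral_le_integral_norm (μ := volume.restrict (Set.Ioc p t)) w
      simpa [Real.norm_eq_abs] using h
    have hadd : (∫ s in Set.Ioc p t, |d₂ s|) + (∫ s in Set.Ioc p t, |w s|) =
        ∫ s in Set.Ioc p t, (|d₂ s| + |w s|) := (integral_add hd₂int.abs hwq.abs).symm
    have hmono : (∫ s in Set.Ioc p t, (|d₂ s| + |w s|)) ≤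
        ∫ s in Set.Ioc p t, ρ s * m s := by
      refine setIntegral_mono_on (hd₂int.abs.add hwq.abs)
        (hρm.mono_set (fun x hx => ⟨hx.1.le, hx.2.trans ht.2⟩))
        measurableSet_Ioc ?_
      intro s _
      have h1' := hwpt s
      have h2' : |d₂ s| ≤ m s := by rw [hmdef]; simp only; linarith [abs_nonneg (d₁ s)]
      have hexp : ρ s * m s = (ρ s - 1) * m s + m s := by ring
      linarith
    rw [hmdef]; simp only
    linarith
  have hbd := gw_fwd p q 0 hpq le_rfl ρ m hρint hρ0 hmcont
    (fun t _ => by rw [hmdef]; positivity) hineq n hn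
  intro t ht
  have := hbd t ht
  rw [hmdef] at this
  simp only [zero_mul] at this
  constructor <;> [skip; skip] <;>
    (first
      | exact abs_eq_zero.mp (le_antisymm (by linarith [abs_nonneg (d₁ t), abs_nonneg (d₂ t)]) (abs_nonneg _))
      )

lemma uniq_bwd (p q : ℝ) (r α σ : ℝ → ℝ) (hpq : p ≤ q)
    (hρint : IntegrableOn (fun t => 1 + |2 * r t / σ t ^ 2| + |2 * α t / σ t ^ 2|) (Set.Icc p q))
    (n : ℕ)
    (hn : (∫ s in Set.Ioc p q, (1 + |2 * r s / σ s ^ 2| + |2 * α s / σ s ^ 2|)) ≤ (n : ℝ) / 2)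
    (d₁ d₂ : ℝ → ℝ)
    (hd₁ : ContinuousOn d₁ (Set.Icc p q)) (hd₂ : ContinuousOn d₂ (Set.Icc p q))
    (hwint : IntegrableOn (fun t => 2 * r t / σ t ^ 2 * d₁ t - 2 * α t / σ t ^ 2 * d₂ t)
      (Set.Ioc p q))
    (heq₁ : ∀ t ∈ Set.Icc p q, d₁ t = - ∫ s in Set.Ioc t q, d₂ s)
    (heq₂ : ∀ t ∈ Set.Icc p q, d₂ t =
      - ∫ s in Set.Ioc t q, (2 * r s / σ s ^ 2 * d₁ s - 2 * α s / σ s ^ 2 * d₂ s)) :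
    ∀ t ∈ Set.Icc p q, d₁ t = 0 ∧ d₂ t = 0 := by
  set ρ : ℝ → ℝ := fun t => 1 + |2 * r t / σ t ^ 2| + |2 * α t / σ t ^ 2| with hρdef
  set w : ℝ → ℝ := fun t => 2 * r t / σ t ^ 2 * d₁ t - 2 * α t / σ t ^ 2 * d₂ t with hwdef
  set m : ℝ → ℝ := fun t => |d₁ t| + |d₂ t| with hmdef
  have hρ0 : ∀ t, 0 ≤ ρ t := fun t => by rw [hρdef]; positivity
  have hwpt : ∀ t, |w t| ≤ (ρ t - 1) * m t := by
    intro t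
    rw [hwdef, hρdef, hmdef]
    simp only
    have h1 : |2 * r t / σ t ^ 2 * d₁ t - 2 * α t / σ t ^ 2 * d₂ t| ≤
        |2 * r t / σ t ^ 2 * d₁ t| + |2 * α t / σ t ^ 2 * d₂ t| := abs_sub _ _
    rw [abs_mul, abs_mul] at h1
    nlinarith [abs_nonneg (d₁ t), abs_nonneg (d₂ t),
      abs_nonneg (2 * r t / σ t ^ 2), abs_nonneg (2 * α t / σ t ^ 2)]
  have hmcont : ContinuousOn m (Set.Icc p q) := hd₁.abs.add hd₂.abs
  have hρm : IntegrableOn (fun s => ρ s * m s) (Set.Icc p q) :=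
    rho_mul_int p q ρ m hρint hρ0 hmcont
  have hineq : ∀ t ∈ Set.Icc p q, m t ≤ 0 + ∫ s in Set.Ioc t q, ρ s * m s := by
    intro t ht
    have hd₂int : IntegrableOn d₂ (Set.Ioc t q) :=
      (hd₂.integrableOn_Icc).mono_set
        (fun x hx => ⟨ht.1.trans hx.1.le, hx.2⟩)
    have hwq : IntegrableOn w (Set.Ioc t q) :=
      hwint.mono_set (Set.Ioc_subset_Ioc ht.1 le_rfl)
    have h1 : |d₁ t| ≤ ∫ s in Set.Ioc t q, |d₂ s| := by
      rw [heq₁ t ht, abs_neg]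
      have h := norm_integral_le_integral_norm (μ := volume.restrict (Set.Ioc t q)) d₂
      simpa [Real.norm_eq_abs] using h
    have h2 : |d₂ t| ≤ ∫ s in Set.Ioc t q, |w s| := by
      rw [heq₂ t ht, abs_neg]
      have h := norm_integral_le_integral_norm (μ := volume.restrict (Set.Ioc t q)) w
      simpa [Real.norm_eq_abs] using h
    have hadd : (∫ s in Set.Ioc t q, |d₂ s|) + (∫ s in Set.Ioc t q, |w s|) =
        ∫ s in Set.Ioc t q, (|d₂ s| + |w s|) := (integral_add hd₂int.abs hwq.abs).symm
    have hmono : (∫ s in Set.Ioc t q, (|d₂ s| + |w s|)) ≤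
        ∫ s in Set.Ioc t q, ρ s * m s := by
      refine setIntegral_mono_on (hd₂int.abs.add hwq.abs)
        (hρm.mono_set (fun x hx => ⟨ht.1.trans hx.1.le, hx.2⟩))
        measurableSet_Ioc ?_
      intro s _
      have h1' := hwpt s
      have h2' : |d₂ s| ≤ m s := by rw [hmdef]; simp only; linarith [abs_nonneg (d₁ s)]
      have hexp : ρ s * m s = (ρ s - 1) * m s + m s := by ring
      linarith
    rw [hmdef]; simp only
    linarith
  have hbd := gw_bwd p q 0 hpq le_rfl ρ m hρint hρ0 hmcont
    (fun t _ => by rw [hmdef]; positivity) hineq n hn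
  intro t ht
  have := hbd t ht
  rw [hmdef] at this
  simp only [zero_mul] at this
  refine ⟨abs_eq_zero.mp (le_antisymm ?_ (abs_nonneg _)),
    abs_eq_zero.mp (le_antisymm ?_ (abs_nonneg _))⟩
  · linarith [abs_nonneg (d₂ t)]
  · linarith [abs_nonneg (d₁ t)]
lemma volterra (a b : ℝ) (r α σ : ℝ → ℝ)
    (hmr : Measurable r) (hmα : Measurable α) (hmσ : Measurable σ)
    (hρint : IntegrableOn (fun t => 1 + |2 * r t / σ t ^ 2| + |2 * α t / σ t ^ 2|) (Set.Icc a b))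
    (n : ℕ)
    (hn : (∫ s in Set.Ioc a b, (1 + |2 * r s / σ s ^ 2| + |2 * α s / σ s ^ 2|)) ≤ (n : ℝ) / 2)
    (p : ℝ) (hp : p ∈ Set.Icc a b)
    (u v : ℝ → ℝ) (c₁ c₂ : ℝ)
    (hu : ∀ y ∈ Set.Icc p b, u y = c₁ + ∫ t in Set.Ioc p y, v t)
    (hv : ∀ y ∈ Set.Icc p b, v y = c₂ +
      ∫ t in Set.Ioc p y, (2 * r t / σ t ^ 2 * u t - 2 * α t / σ t ^ 2 * v t)) :
    IntegrableOn v (Set.Ioc p b) ∧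
    IntegrableOn (fun t => 2 * r t / σ t ^ 2 * u t - 2 * α t / σ t ^ 2 * v t) (Set.Ioc p b) ∧
    ContinuousOn u (Set.Icc p b) ∧ ContinuousOn v (Set.Icc p b) ∧
    ∀ y ∈ Set.Icc p b, |u y| + |v y| ≤ (|c₁| + |c₂|) * 3 ^ n := by
  set ρ : ℝ → ℝ := fun t => 1 + |2 * r t / σ t ^ 2| + |2 * α t / σ t ^ 2| with hρdef
  set w : ℝ → ℝ := fun t => 2 * r t / σ t ^ 2 * u t - 2 * α t / σ t ^ 2 * v t with hwdef
  have hρ0 : ∀ t, 0 ≤ ρ t := fun t => by rw [hρdef]; positivity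
  have hρ1 : ∀ t, 1 ≤ ρ t := fun t => by
    rw [hρdef]; simp only
    have := abs_nonneg (2 * r t / σ t ^ 2); have := abs_nonneg (2 * α t / σ t ^ 2); linarith
  have hwpt : ∀ t, |w t| ≤ (ρ t - 1) * (|u t| + |v t|) := by
    intro t
    rw [hwdef, hρdef]
    simp only
    have h1 : |2 * r t / σ t ^ 2 * u t - 2 * α t / σ t ^ 2 * v t| ≤
        |2 * r t / σ t ^ 2 * u t| + |2 * α t / σ t ^ 2 * v t| := abs_sub _ _
    rw [abs_mul, abs_mul] at h1
    nlinarith [abs_nonneg (u t), abs_nonneg (v t),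
      abs_nonneg (2 * r t / σ t ^ 2), abs_nonneg (2 * α t / σ t ^ 2)]
  set C : ℝ := |c₁| + |c₂| with hCdef
  have hC0 : 0 ≤ C := by positivity
  have hpb : p ≤ b := hp.2
  have hsub : ∀ y, y ≤ b → Set.Icc p y ⊆ Set.Icc a b :=
    fun y hy => Set.Icc_subset_Icc hp.1 hy
  have hsub' : ∀ y, y ≤ b → Set.Ioc p y ⊆ Set.Ioc a b :=
    fun y hy => Set.Ioc_subset_Ioc hp.1 hy
  -- integral of rho over any subinterval is ≤ n/2
  have hnsub : ∀ y, y ≤ b → (∫ s in Set.Ioc p y, ρ s) ≤ n / 2 := by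
    intro y hy
    refine le_trans (setIntegral_mono_set (hρint.mono_set Set.Ioc_subset_Icc_self)
      (Eventually.of_forall fun x => hρ0 x) ((hsub' y hy).eventuallyLE)) hn
  -- Step 1 : on any good interval we get continuity and the Gronwall bound
  have good : ∀ y ∈ Set.Icc p b, IntegrableOn w (Set.Ioc p y) →
      ContinuousOn u (Set.Icc p y) ∧ ContinuousOn v (Set.Icc p y) ∧
      IntegrableOn v (Set.Ioc p y) ∧
      ∀ t ∈ Set.Icc p y, |u t| + |v t| ≤ C * 3 ^ n := by
    intro y hy hwint
    have hpy : p ≤ y := hy.1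
    have hwIcc : IntegrableOn w (Set.Icc p y) :=
      (integrableOn_Icc_iff_integrableOn_Ioc).mpr hwint
    have hvcont : ContinuousOn v (Set.Icc p y) := by
      have hcont : ContinuousOn (fun y' => c₂ + ∫ t in Set.Ioc p y', w t) (Set.Icc p y) :=
        continuousOn_const.add (intervalIntegral.continuousOn_primitive hwIcc)
      exact hcont.congr (fun y' hy' => hv y' ⟨hy'.1, hy'.2.trans hy.2⟩)
    have hvint : IntegrableOn v (Set.Ioc p y) :=
      (hvcont.integrableOn_Icc).mono_set Set.Ioc_subset_Icc_self
    have hvIcc : IntegrableOn v (Set.Icc p y) := hvcont.integrableOn_Icc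
    have hucont : ContinuousOn u (Set.Icc p y) := by
      have hcont : ContinuousOn (fun y' => c₁ + ∫ t in Set.Ioc p y', v t) (Set.Icc p y) :=
        continuousOn_const.add (intervalIntegral.continuousOn_primitive hvIcc)
      exact hcont.congr (fun y' hy' => hu y' ⟨hy'.1, hy'.2.trans hy.2⟩)
    set m : ℝ → ℝ := fun t => |u t| + |v t| with hmdef
    have hmcont : ContinuousOn m (Set.Icc p y) := (hucont.abs).add (hvcont.abs)
    have hm0 : ∀ t ∈ Set.Icc p y, 0 ≤ m t := fun t _ => by rw [hmdef]; positivity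
    -- integrability of ρ * m
    obtain ⟨M₀, hM₀⟩ : ∃ M₀, ∀ t ∈ Set.Icc p y, ‖m t‖ ≤ M₀ :=
      isCompact_Icc.exists_bound_of_continuousOn hmcont
    have hρy : IntegrableOn ρ (Set.Icc p y) := hρint.mono_set (hsub y hy.2)
    have hρm : IntegrableOn (fun s => ρ s * m s) (Set.Icc p y) := by
      refine Integrable.mono' (hρy.abs.const_mul M₀)
        (hρy.aestronglyMeasurable.mul (hmcont.aestronglyMeasurable measurableSet_Icc)) ?_
      filter_upwards [ae_restrict_mem measurableSet_Icc] with t ht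
      have h1 : ‖ρ t * m t‖ = ρ t * ‖m t‖ := by
        rw [norm_mul, Real.norm_of_nonneg (hρ0 t)]
      rw [h1]
      calc ρ t * ‖m t‖ ≤ ρ t * M₀ := mul_le_mul_of_nonneg_left (hM₀ t ht) (hρ0 t)
        _ = M₀ * |ρ t| := by rw [abs_of_nonneg (hρ0 t)]; ring
    have hineq : ∀ t ∈ Set.Icc p y, m t ≤ C + ∫ s in Set.Ioc p t, ρ s * m s := by
      intro t ht
      have htb : t ∈ Set.Icc p b := ⟨ht.1, ht.2.trans hy.2⟩
      have hvq : IntegrableOn v (Set.Ioc p t) :=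
        hvint.mono_set (Set.Ioc_subset_Ioc le_rfl ht.2)
      have hwq : IntegrableOn w (Set.Ioc p t) :=
        hwint.mono_set (Set.Ioc_subset_Ioc le_rfl ht.2)
      have h_u : |u t| ≤ |c₁| + ∫ s in Set.Ioc p t, |v s| := by
        rw [hu t htb]
        refine le_trans (abs_add_le _ _) (add_le_add_right ?_ _)
        have h := norm_integral_le_integral_norm (μ := volume.restrict (Set.Ioc p t)) v
        simpa [Real.norm_eq_abs] using h
      have h_v : |v t| ≤ |c₂| + ∫ s in Set.Ioc p t, |w s| := by
        rw [hv t htb]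
        refine le_trans (abs_add_le _ _) (add_le_add_right ?_ _)
        have h := norm_integral_le_integral_norm (μ := volume.restrict (Set.Ioc p t)) w
        simpa [Real.norm_eq_abs] using h
      have hadd : (∫ s in Set.Ioc p t, |v s|) + (∫ s in Set.Ioc p t, |w s|) =
          ∫ s in Set.Ioc p t, (|v s| + |w s|) := (integral_add hvq.abs hwq.abs).symm
      have hmono : (∫ s in Set.Ioc p t, (|v s| + |w s|)) ≤
          ∫ s in Set.Ioc p t, ρ s * m s := by
        refine setIntegral_mono_on (hvq.abs.add hwq.abs)
          (hρm.mono_set (Set.Icc_subset_Icc le_rfl ht.2 |>.trans' Set.Ioc_subset_Icc_self))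
          measurableSet_Ioc ?_
        intro s hs
        have h1 := hwpt s
        have h2 : |v s| ≤ m s := by rw [hmdef]; simp only; nlinarith [abs_nonneg (u s)]
        have h3 : m s = |u s| + |v s| := rfl
        have h1' : |w s| ≤ (ρ s - 1) * m s := by rw [h3]; exact h1
        have hexp : ρ s * m s = (ρ s - 1) * m s + m s := by ring
        linarith
      rw [hmdef]
      simp only
      linarith
    have := gw_fwd p y C hpy hC0 ρ m hρy hρ0 hmcont hm0 hineq n (hnsub y hy.2)
    exact ⟨hucont, hvcont, hvint, this⟩
  -- the set of good endpoints
  set T : Set ℝ := {y | y ∈ Set.Icc p b ∧ IntegrableOn w (Set.Ioc p y)} with hTdef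
  have hpT : p ∈ T := ⟨⟨le_rfl, hpb⟩, by simp⟩
  have hTne : T.Nonempty := ⟨p, hpT⟩
  have hTbdd : BddAbove T := ⟨b, fun y hy => hy.1.2⟩
  set τ : ℝ := sSup T with hτdef
  have hτmem : τ ∈ Set.Icc p b := ⟨le_csSup hTbdd hpT, csSup_le hTne (fun y hy => hy.1.2)⟩
  have hIcoT : ∀ t ∈ Set.Ico p τ, t ∈ T := by
    intro t ht
    obtain ⟨y', hy'T, hty'⟩ := exists_lt_of_lt_csSup hTne ht.2
    exact ⟨⟨ht.1, ht.2.le.trans hτmem.2⟩,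
      hy'T.2.mono_set (Set.Ioc_subset_Ioc le_rfl hty'.le)⟩
  have hbeyond : ∀ y ∈ Set.Icc p b, τ < y → v y = c₂ := by
    intro y hy hτy
    have hyT : y ∉ T := fun hmem => absurd (le_csSup hTbdd hmem) (not_le.mpr hτy)
    have : ¬ IntegrableOn w (Set.Ioc p y) := fun h => hyT ⟨hy, h⟩
    have hz : (∫ t in Set.Ioc p y, w t) = 0 := integral_undef this
    rw [hv y hy]
    rw [hwdef] at hz
    simp only at hz ⊢
    rw [hz]; ring
  have hbnd : ∀ t ∈ Set.Ico p τ, |u t| + |v t| ≤ C * 3 ^ n := by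
    intro t ht
    have htT := hIcoT t ht
    exact ((good t htT.1 htT.2).2.2.2) t ⟨le_rfl.trans ht.1, le_rfl⟩ |>.trans_eq rfl
  -- a.e. x ≠ τ
  have hne_ae : ∀ᵐ x : ℝ, x ≠ τ := by
    have h0 : (volume : Measure ℝ) {x | x = τ} = 0 := by
      simpa [Set.setOf_eq_eq_singleton] using measure_singleton τ
    rw [ae_iff]; convert h0 using 2; ext x; simp
  set M₁ : ℝ := max (C * 3 ^ n) |c₂| with hM₁def
  have hM₁0 : 0 ≤ M₁ := le_max_of_le_right (abs_nonneg c₂)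
  -- v continuous on the open part
  have hvcontIoo : ContinuousOn v (Set.Ioo p τ) := by
    intro t ht
    obtain ⟨y', hy'T, hty'⟩ := exists_lt_of_lt_csSup hTne ht.2
    have hcont := (good y' hy'T.1 hy'T.2).2.1
    have hcw : ContinuousWithinAt v (Set.Icc p y') t := hcont t ⟨ht.1.le, hty'.le⟩
    refine hcw.mono_of_mem_nhdsWithin ?_
    have h1 : Set.Ioo p τ ∩ Set.Iio y' ∈ nhdsWithin t (Set.Ioo p τ) :=
      Filter.inter_mem self_mem_nhdsWithin
        (mem_nhdsWithin_of_mem_nhds (Iio_mem_nhds hty'))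
    exact Filter.mem_of_superset h1 (fun x hx => ⟨hx.1.1.le, hx.2.le⟩)
  have hmeas1 : AEStronglyMeasurable v (volume.restrict (Set.Ioo p τ)) :=
    hvcontIoo.aestronglyMeasurable measurableSet_Ioo
  have hmeas2 : AEStronglyMeasurable v (volume.restrict (Set.Icc τ b)) := by
    refine AEStronglyMeasurable.congr (f := fun _ => c₂) aestronglyMeasurable_const ?_
    filter_upwards [ae_restrict_of_ae hne_ae, ae_restrict_mem measurableSet_Icc]
      with x hx1 hx2
    exact (hbeyond x ⟨hτmem.1.trans hx2.1, hx2.2⟩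
      (lt_of_le_of_ne hx2.1 (Ne.symm hx1))).symm
  have hmeas : AEStronglyMeasurable v (volume.restrict (Set.Ioc p b)) := by
    have hunion : AEStronglyMeasurable v (volume.restrict (Set.Ioo p τ ∪ Set.Icc τ b)) :=
      (aestronglyMeasurable_union_iff).mpr ⟨hmeas1, hmeas2⟩
    refine hunion.mono_measure (Measure.restrict_mono ?_ le_rfl)
    intro x hx
    rcases lt_or_ge x τ with h | h
    · exact Or.inl ⟨hx.1, h⟩
    · exact Or.inr ⟨h, hx.2⟩
  have hvbdd : ∀ᵐ x ∂(volume.restrict (Set.Ioc p b)), ‖v x‖ ≤ M₁ := by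
    filter_upwards [ae_restrict_of_ae hne_ae, ae_restrict_mem measurableSet_Ioc]
      with x hx1 hx2
    rcases lt_or_ge x τ with h | h
    · have := hbnd x ⟨hx2.1.le, h⟩
      have h2 : |v x| ≤ |u x| + |v x| := le_add_of_nonneg_left (abs_nonneg _)
      rw [Real.norm_eq_abs]
      exact le_max_of_le_left (h2.trans this)
    · have hxτ : τ < x := lt_of_le_of_ne h (Ne.symm hx1)
      rw [hbeyond x ⟨hx2.1.le, hx2.2⟩ hxτ]
      exact le_max_of_le_right (le_of_eq (Real.norm_eq_abs c₂))
  have hvib : IntegrableOn v (Set.Ioc p b) := by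
    refine Integrable.mono' (g := fun _ => M₁) ?_ hmeas hvbdd
    exact integrableOn_const measure_Ioc_lt_top.ne
  have hvIccb : IntegrableOn v (Set.Icc p b) := (integrableOn_Icc_iff_integrableOn_Ioc).mpr hvib
  have hucontb : ContinuousOn u (Set.Icc p b) := by
    have hcont : ContinuousOn (fun y' => c₁ + ∫ t in Set.Ioc p y', v t) (Set.Icc p b) :=
      continuousOn_const.add (intervalIntegral.continuousOn_primitive hvIccb)
    exact hcont.congr (fun y' hy' => hu y' hy')
  obtain ⟨M₂, hM₂⟩ : ∃ M₂, ∀ t ∈ Set.Icc p b, ‖u t‖ ≤ M₂ :=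
    isCompact_Icc.exists_bound_of_continuousOn hucontb
  have hM₂0 : 0 ≤ M₂ := (norm_nonneg _).trans (hM₂ p ⟨le_rfl, hpb⟩)
  have humeas : AEStronglyMeasurable u (volume.restrict (Set.Ioc p b)) :=
    (hucontb.mono Set.Ioc_subset_Icc_self).aestronglyMeasurable measurableSet_Ioc
  have hcoef1 : Measurable (fun t => 2 * r t / σ t ^ 2) :=
    (measurable_const.mul hmr).div (hmσ.pow_const 2)
  have hcoef2 : Measurable (fun t => 2 * α t / σ t ^ 2) :=
    (measurable_const.mul hmα).div (hmσ.pow_const 2)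
  have hwmeas : AEStronglyMeasurable w (volume.restrict (Set.Ioc p b)) := by
    rw [hwdef]
    exact ((hcoef1.aestronglyMeasurable).mul humeas).sub
      ((hcoef2.aestronglyMeasurable).mul hmeas)
  have hwbd : ∀ᵐ x ∂(volume.restrict (Set.Ioc p b)), ‖w x‖ ≤ (M₂ + M₁) * ρ x := by
    filter_upwards [hvbdd, ae_restrict_mem measurableSet_Ioc] with x hx1 hx2
    have h1 := hwpt x
    have h2 : |u x| ≤ M₂ := by
      have := hM₂ x ⟨hx2.1.le, hx2.2⟩
      simpa [Real.norm_eq_abs] using this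
    have h3 : |v x| ≤ M₁ := by simpa [Real.norm_eq_abs] using hx1
    rw [Real.norm_eq_abs]
    have h4 : (ρ x - 1) * (|u x| + |v x|) ≤ (ρ x - 1) * (M₂ + M₁) := by
      apply mul_le_mul_of_nonneg_left (by linarith) (by linarith [hρ1 x])
    have h5 : (ρ x - 1) * (M₂ + M₁) ≤ ρ x * (M₂ + M₁) := by
      apply mul_le_mul_of_nonneg_right (by linarith) (by linarith)
    calc |w x| ≤ (ρ x - 1) * (|u x| + |v x|) := h1
      _ ≤ (ρ x - 1) * (M₂ + M₁) := h4
      _ ≤ ρ x * (M₂ + M₁) := h5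
      _ = (M₂ + M₁) * ρ x := by ring
  have hwib : IntegrableOn w (Set.Ioc p b) := by
    refine Integrable.mono' (g := fun x => (M₂ + M₁) * ρ x) ?_ hwmeas hwbd
    exact (hρint.mono_set (fun x hx => ⟨hp.1.trans hx.1.le, hx.2⟩)).const_mul (M₂ + M₁)
  obtain ⟨hu1, hv1, hv2, hbd⟩ := good b ⟨hpb, le_rfl⟩ hwib
  exact ⟨hv2, hwib, hu1, hv1, hbd⟩
set_option maxHeartbeats 1000000 in
/-- Blow-up of two-point boundary solutions: if φ₁₂(a,·) > 0 on (a,b),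
φ₁₂(a,b) = 0 and ∫ₐᵇ g φ₁₂(·,b)/σ² > 0, then v_ε(x) → +∞ as ε → 0⁺ for every
x ∈ (a,b), where v_ε is the solution vanishing at a and b−ε. -/
theorem stmt_18
    (I : Set ℝ) (hI : IsOpen I) (hIconn : I.OrdConnected)
    (α r σ : ℝ → ℝ)
    (hmα : Measurable α) (hmr : Measurable r) (hmσ : Measurable σ)
    (hσpos : ∀ x ∈ I, 0 < σ x)
    (hint1 : MeasureTheory.LocallyIntegrableOn (fun z => 1 / (σ z) ^ 2) I)
    (hint2 : MeasureTheory.LocallyIntegrableOn (fun z => α z / (σ z) ^ 2) I)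
    (hint3 : MeasureTheory.LocallyIntegrableOn (fun z => r z / (σ z) ^ 2) I)
    (φ11 φ12 φ21 φ22 : ℝ → ℝ → ℝ)
    (hφ11 : ∀ x ∈ I, ∀ y ∈ I, φ11 x y = 1 + ∫ z in x..y, φ21 x z)
    (hφ12 : ∀ x ∈ I, ∀ y ∈ I, φ12 x y = ∫ z in x..y, φ22 x z)
    (hφ21 : ∀ x ∈ I, ∀ y ∈ I, φ21 x y =
      ∫ z in x..y, (2 * r z / (σ z) ^ 2 * φ11 x z - 2 * α z / (σ z) ^ 2 * φ21 x z))
    (hφ22 : ∀ x ∈ I, ∀ y ∈ I, φ22 x y = 1 +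
      ∫ z in x..y, (2 * r z / (σ z) ^ 2 * φ12 x z - 2 * α z / (σ z) ^ 2 * φ22 x z))
    (g : ℝ → ℝ) (hmg : Measurable g) (hg0 : ∀ x ∈ I, 0 ≤ g x)
    (hgint : MeasureTheory.LocallyIntegrableOn (fun z => g z / (σ z) ^ 2) I)
    (a b : ℝ) (ha : a ∈ I) (hb : b ∈ I) (hab : a < b)
    (hpos : ∀ x ∈ Set.Ioo a b, 0 < φ12 a x)
    (h0 : φ12 a b = 0)
    (hgpos : 0 < ∫ z in a..b, g z * φ12 z b / (σ z) ^ 2) :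
    ∀ x ∈ Set.Ioo a b,
      Filter.Tendsto (fun ε : ℝ =>
        (∫ z in a..(b - ε), 2 * g z / (σ z) ^ 2 * φ12 z (b - ε)) / φ12 a (b - ε)
            * φ12 a x
          - ∫ z in a..x, 2 * g z / (σ z) ^ 2 * φ12 z x)
        (nhdsWithin 0 (Set.Ioi 0)) Filter.atTop := by
  intro x hx
  have hIab : Set.Icc a b ⊆ I := hIconn.out ha hb
  have hmem : ∀ z ∈ Set.Icc a b, z ∈ I := fun z hz => hIab hz
  -- integrability of rho
  have h2 : IntegrableOn (fun z => α z / σ z ^ 2) (Set.Icc a b) :=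
    hint2.integrableOn_compact_subset hIab isCompact_Icc
  have h3 : IntegrableOn (fun z => r z / σ z ^ 2) (Set.Icc a b) :=
    hint3.integrableOn_compact_subset hIab isCompact_Icc
  have e2 : IntegrableOn (fun t => |2 * α t / σ t ^ 2|) (Set.Icc a b) := by
    have heq : (fun t => |2 * α t / σ t ^ 2|) = fun t => ‖(2:ℝ) * (α t / σ t ^ 2)‖ := by
      funext t; rw [Real.norm_eq_abs, mul_div_assoc]
    rw [heq]; exact (h2.const_mul 2).norm
  have e3 : IntegrableOn (fun t => |2 * r t / σ t ^ 2|) (Set.Icc a b) := by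
    have heq : (fun t => |2 * r t / σ t ^ 2|) = fun t => ‖(2:ℝ) * (r t / σ t ^ 2)‖ := by
      funext t; rw [Real.norm_eq_abs, mul_div_assoc]
    rw [heq]; exact (h3.const_mul 2).norm
  have hρint : IntegrableOn (fun t => 1 + |2 * r t / σ t ^ 2| + |2 * α t / σ t ^ 2|)
      (Set.Icc a b) := by
    have h1 : IntegrableOn (fun _ : ℝ => (1:ℝ)) (Set.Icc a b) :=
      integrableOn_const measure_Icc_lt_top.ne
    exact (h1.add e3).add e2
  have hρ0 : ∀ t : ℝ, 0 ≤ 1 + |2 * r t / σ t ^ 2| + |2 * α t / σ t ^ 2| :=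
    fun t => by positivity
  set n : ℕ := ⌈2 * ∫ s in Set.Ioc a b, (1 + |2 * r s / σ s ^ 2| + |2 * α s / σ s ^ 2|)⌉₊
    with hndef
  have hn : (∫ s in Set.Ioc a b, (1 + |2 * r s / σ s ^ 2| + |2 * α s / σ s ^ 2|)) ≤ (n : ℝ) / 2 := by
    have h := Nat.le_ceil (2 * ∫ s in Set.Ioc a b, (1 + |2 * r s / σ s ^ 2| + |2 * α s / σ s ^ 2|))
    rw [hndef]
    linarith
  have hnmono : ∀ s t : ℝ, a ≤ s → t ≤ b →
      (∫ x in Set.Ioc s t, (1 + |2 * r x / σ x ^ 2| + |2 * α x / σ x ^ 2|)) ≤ (n : ℝ) / 2 := by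
    intro s t hs ht
    refine le_trans (setIntegral_mono_set (hρint.mono_set Set.Ioc_subset_Icc_self)
      (Filter.Eventually.of_forall fun u => hρ0 u)
      ((Set.Ioc_subset_Ioc hs ht).eventuallyLE)) hn
  -- Volterra for the two basic pairs at a
  have hVA := volterra a b r α σ hmr hmα hmσ hρint n hn a ⟨le_rfl, hab.le⟩
    (φ11 a) (φ21 a) 1 0
    (by
      intro y hy
      rw [hφ11 a ha y (hmem y hy), intervalIntegral.integral_of_le hy.1])
    (by
      intro y hy
      rw [hφ21 a ha y (hmem y hy), intervalIntegral.integral_of_le hy.1, zero_add])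
  obtain ⟨hφ21int, hwAint, hφ11cont, hφ21cont, hbdA⟩ := hVA
  have hVB := volterra a b r α σ hmr hmα hmσ hρint n hn a ⟨le_rfl, hab.le⟩
    (φ12 a) (φ22 a) 0 1
    (by
      intro y hy
      rw [hφ12 a ha y (hmem y hy), intervalIntegral.integral_of_le hy.1, zero_add])
    (by
      intro y hy
      rw [hφ22 a ha y (hmem y hy), intervalIntegral.integral_of_le hy.1])
  obtain ⟨hφ22int, hwBint, hφ12cont, hφ22cont, hbdB⟩ := hVB
  -- initial values
  have h11a : φ11 a a = 1 := by rw [hφ11 a ha a ha]; simp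
  have h12a : φ12 a a = 0 := by rw [hφ12 a ha a ha]; simp
  have h21a : φ21 a a = 0 := by rw [hφ21 a ha a ha]; simp
  have h22a : φ22 a a = 1 := by rw [hφ22 a ha a ha]; simp
  -- Wronskian
  set W : ℝ → ℝ := fun z => φ11 a z * φ22 a z - φ12 a z * φ21 a z with hWdef
  have hWcont : ContinuousOn W (Set.Icc a b) :=
    (hφ11cont.mul hφ22cont).sub (hφ12cont.mul hφ21cont)
  have hWa : W a = 1 := by rw [hWdef]; simp [h11a, h12a, h21a, h22a]
  -- splitting of integrals
  have hsplitInt : ∀ (f : ℝ → ℝ), IntegrableOn f (Set.Ioc a b) → ∀ z y : ℝ,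
      a ≤ z → z ≤ y → y ≤ b →
      (∫ s in Set.Ioc a y, f s) = (∫ s in Set.Ioc a z, f s) + ∫ s in Set.Ioc z y, f s := by
    intro f hf z y haz hzy hyb
    rw [← setIntegral_union (Set.Ioc_disjoint_Ioc_of_le le_rfl) measurableSet_Ioc
      (hf.mono_set (Set.Ioc_subset_Ioc le_rfl (hzy.trans hyb)))
      (hf.mono_set (Set.Ioc_subset_Ioc haz hyb)),
      Set.Ioc_union_Ioc_eq_Ioc haz hzy]
  -- linear combination equations based at a
  have hψeq : ∀ c₁ c₂ : ℝ, ∀ y ∈ Set.Icc a b,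
      c₁ * φ11 a y + c₂ * φ12 a y = c₁ + ∫ s in Set.Ioc a y, (c₁ * φ21 a s + c₂ * φ22 a s) := by
    intro c₁ c₂ y hy
    rw [hφ11 a ha y (hmem y hy), hφ12 a ha y (hmem y hy),
        intervalIntegral.integral_of_le hy.1, intervalIntegral.integral_of_le hy.1]
    rw [integral_add ((hφ21int.mono_set (Set.Ioc_subset_Ioc le_rfl hy.2)).const_mul c₁)
        ((hφ22int.mono_set (Set.Ioc_subset_Ioc le_rfl hy.2)).const_mul c₂),
        integral_const_mul, integral_const_mul]
    ring
  have hχeq : ∀ c₁ c₂ : ℝ, ∀ y ∈ Set.Icc a b,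
      c₁ * φ21 a y + c₂ * φ22 a y = c₂ + ∫ s in Set.Ioc a y,
        (2 * r s / σ s ^ 2 * (c₁ * φ11 a s + c₂ * φ12 a s)
          - 2 * α s / σ s ^ 2 * (c₁ * φ21 a s + c₂ * φ22 a s)) := by
    intro c₁ c₂ y hy
    have hintA := hwAint.mono_set (Set.Ioc_subset_Ioc (le_refl a) hy.2)
    have hintB := hwBint.mono_set (Set.Ioc_subset_Ioc (le_refl a) hy.2)
    have hrw : ∀ s : ℝ, (2 * r s / σ s ^ 2 * (c₁ * φ11 a s + c₂ * φ12 a s)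
        - 2 * α s / σ s ^ 2 * (c₁ * φ21 a s + c₂ * φ22 a s))
        = c₁ * (2 * r s / σ s ^ 2 * φ11 a s - 2 * α s / σ s ^ 2 * φ21 a s)
          + c₂ * (2 * r s / σ s ^ 2 * φ12 a s - 2 * α s / σ s ^ 2 * φ22 a s) := fun s => by ring
    rw [hφ21 a ha y (hmem y hy), hφ22 a ha y (hmem y hy),
        intervalIntegral.integral_of_le hy.1, intervalIntegral.integral_of_le hy.1]
    simp only [hrw]
    rw [integral_add (hintA.const_mul c₁) (hintB.const_mul c₂),
        integral_const_mul, integral_const_mul]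
    ring
  have hwcomb : ∀ c₁ c₂ : ℝ, IntegrableOn (fun s =>
      2 * r s / σ s ^ 2 * (c₁ * φ11 a s + c₂ * φ12 a s)
        - 2 * α s / σ s ^ 2 * (c₁ * φ21 a s + c₂ * φ22 a s)) (Set.Ioc a b) := by
    intro c₁ c₂
    refine ((hwAint.const_mul c₁).add (hwBint.const_mul c₂)).congr
      (Filter.Eventually.of_forall fun s => ?_)
    simp only [Pi.add_apply]
    ring
  -- the Wronskian never vanishes
  have hWne : ∀ z ∈ Set.Icc a b, W z ≠ 0 := by
    intro z hz hW0
    obtain ⟨c₁, c₂, hcne, hz1, hz2⟩ : ∃ c₁ c₂ : ℝ, (c₁ ≠ 0 ∨ c₂ ≠ 0) ∧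
        c₁ * φ11 a z + c₂ * φ12 a z = 0 ∧ c₁ * φ21 a z + c₂ * φ22 a z = 0 := by
      by_cases h21 : φ21 a z = 0 ∧ φ22 a z = 0
      · by_cases h11 : φ11 a z = 0 ∧ φ12 a z = 0
        · exact ⟨1, 0, Or.inl one_ne_zero, by rw [h11.1, h11.2]; ring,
            by rw [h21.1, h21.2]; ring⟩
        · refine ⟨φ12 a z, -(φ11 a z), ?_, by ring, by rw [h21.1, h21.2]; ring⟩
          rcases not_and_or.mp h11 with h | h
          · exact Or.inr (neg_ne_zero.mpr h)
          · exact Or.inl h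
      · refine ⟨φ22 a z, -(φ21 a z), ?_, ?_, by ring⟩
        · rcases not_and_or.mp h21 with h | h
          · exact Or.inr (neg_ne_zero.mpr h)
          · exact Or.inl h
        · have hWz : φ22 a z * φ11 a z + -(φ21 a z) * φ12 a z = W z := by rw [hWdef]; ring
          rw [hWz, hW0]
    have hints : IntegrableOn (fun s => c₁ * φ21 a s + c₂ * φ22 a s) (Set.Ioc a b) :=
      (hφ21int.const_mul c₁).add (hφ22int.const_mul c₂)
    have heq₁ : ∀ t ∈ Set.Icc a z, c₁ * φ11 a t + c₂ * φ12 a t =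
        - ∫ s in Set.Ioc t z, (c₁ * φ21 a s + c₂ * φ22 a s) := by
      intro t ht
      have h1 := hψeq c₁ c₂ t ⟨ht.1, ht.2.trans hz.2⟩
      have h2 := hψeq c₁ c₂ z hz
      have h3 := hsplitInt _ hints t z ht.1 ht.2 hz.2
      linarith [hz1]
    have heq₂ : ∀ t ∈ Set.Icc a z, c₁ * φ21 a t + c₂ * φ22 a t =
        - ∫ s in Set.Ioc t z, (2 * r s / σ s ^ 2 * (c₁ * φ11 a s + c₂ * φ12 a s)
          - 2 * α s / σ s ^ 2 * (c₁ * φ21 a s + c₂ * φ22 a s)) := by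
      intro t ht
      have h1 := hχeq c₁ c₂ t ⟨ht.1, ht.2.trans hz.2⟩
      have h2 := hχeq c₁ c₂ z hz
      have h3 := hsplitInt _ (hwcomb c₁ c₂) t z ht.1 ht.2 hz.2
      linarith [hz2]
    have hcont1 : ContinuousOn (fun y => c₁ * φ11 a y + c₂ * φ12 a y) (Set.Icc a z) :=
      ((continuousOn_const.mul hφ11cont).add (continuousOn_const.mul hφ12cont)).mono
        (Set.Icc_subset_Icc le_rfl hz.2)
    have hcont2 : ContinuousOn (fun y => c₁ * φ21 a y + c₂ * φ22 a y) (Set.Icc a z) :=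
      ((continuousOn_const.mul hφ21cont).add (continuousOn_const.mul hφ22cont)).mono
        (Set.Icc_subset_Icc le_rfl hz.2)
    have huB := uniq_bwd a z r α σ hz.1 (hρint.mono_set (Set.Icc_subset_Icc le_rfl hz.2)) n
      (hnmono a z le_rfl hz.2) _ _ hcont1 hcont2
      ((hwcomb c₁ c₂).mono_set (Set.Ioc_subset_Ioc le_rfl hz.2)) heq₁ heq₂
    have hca := huB a ⟨le_rfl, hz.1⟩
    rcases hcne with h | h
    · apply h
      have h5 := hca.1
      rw [h11a, h12a] at h5
      linarith
    · apply h
      have h5 := hca.2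
      rw [h21a, h22a] at h5
      linarith
  -- the representation formula
  have hstar : ∀ z ∈ Set.Icc a b, ∀ y ∈ Set.Icc z b,
      W z * φ12 z y = -(φ12 a z) * φ11 a y + φ11 a z * φ12 a y := by
    intro z hz
    have hVZ := volterra a b r α σ hmr hmα hmσ hρint n hn z hz (φ12 z) (φ22 z) 0 1
      (by
        intro y hy
        rw [hφ12 z (hmem z hz) y (hmem y ⟨hz.1.trans hy.1, hy.2⟩),
          intervalIntegral.integral_of_le hy.1, zero_add])
      (by
        intro y hy
        rw [hφ22 z (hmem z hz) y (hmem y ⟨hz.1.trans hy.1, hy.2⟩),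
          intervalIntegral.integral_of_le hy.1])
    obtain ⟨hv22int, hwZint, hφ12zcont, hφ22zcont, _⟩ := hVZ
    have huZ : ∀ y ∈ Set.Icc z b, φ12 z y = ∫ s in Set.Ioc z y, φ22 z s := by
      intro y hy
      rw [hφ12 z (hmem z hz) y (hmem y ⟨hz.1.trans hy.1, hy.2⟩),
        intervalIntegral.integral_of_le hy.1]
    have hvZ : ∀ y ∈ Set.Icc z b, φ22 z y = 1 + ∫ s in Set.Ioc z y,
        (2 * r s / σ s ^ 2 * φ12 z s - 2 * α s / σ s ^ 2 * φ22 z s) := by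
      intro y hy
      rw [hφ22 z (hmem z hz) y (hmem y ⟨hz.1.trans hy.1, hy.2⟩),
        intervalIntegral.integral_of_le hy.1]
    have hints : IntegrableOn (fun s => -(φ12 a z) * φ21 a s + φ11 a z * φ22 a s)
        (Set.Ioc a b) := (hφ21int.const_mul _).add (hφ22int.const_mul _)
    have hψz0 : -(φ12 a z) * φ11 a z + φ11 a z * φ12 a z = 0 := by ring
    have hχzW : -(φ12 a z) * φ21 a z + φ11 a z * φ22 a z = W z := by rw [hWdef]; ring
    have heqψ : ∀ y ∈ Set.Icc z b, -(φ12 a z) * φ11 a y + φ11 a z * φ12 a y =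
        ∫ s in Set.Ioc z y, (-(φ12 a z) * φ21 a s + φ11 a z * φ22 a s) := by
      intro y hy
      have hyab : y ∈ Set.Icc a b := ⟨hz.1.trans hy.1, hy.2⟩
      have h1 := hψeq (-(φ12 a z)) (φ11 a z) y hyab
      have h2 := hψeq (-(φ12 a z)) (φ11 a z) z hz
      have h3 := hsplitInt _ hints z y hz.1 hy.1 hy.2
      linarith [hψz0]
    have heqχ : ∀ y ∈ Set.Icc z b, -(φ12 a z) * φ21 a y + φ11 a z * φ22 a y =
        W z + ∫ s in Set.Ioc z y,
          (2 * r s / σ s ^ 2 * (-(φ12 a z) * φ11 a s + φ11 a z * φ12 a s)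
            - 2 * α s / σ s ^ 2 * (-(φ12 a z) * φ21 a s + φ11 a z * φ22 a s)) := by
      intro y hy
      have hyab : y ∈ Set.Icc a b := ⟨hz.1.trans hy.1, hy.2⟩
      have h1 := hχeq (-(φ12 a z)) (φ11 a z) y hyab
      have h2 := hχeq (-(φ12 a z)) (φ11 a z) z hz
      have h3 := hsplitInt _ (hwcomb (-(φ12 a z)) (φ11 a z)) z y hz.1 hy.1 hy.2
      linarith [hχzW]
    -- difference functions
    have hcont1 : ContinuousOn
        (fun y => (-(φ12 a z) * φ11 a y + φ11 a z * φ12 a y) - W z * φ12 z y)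
        (Set.Icc z b) :=
      (((continuousOn_const.mul hφ11cont).add (continuousOn_const.mul hφ12cont)).mono
        (Set.Icc_subset_Icc hz.1 le_rfl)).sub (continuousOn_const.mul hφ12zcont)
    have hcont2 : ContinuousOn
        (fun y => (-(φ12 a z) * φ21 a y + φ11 a z * φ22 a y) - W z * φ22 z y)
        (Set.Icc z b) :=
      (((continuousOn_const.mul hφ21cont).add (continuousOn_const.mul hφ22cont)).mono
        (Set.Icc_subset_Icc hz.1 le_rfl)).sub (continuousOn_const.mul hφ22zcont)
    have hwd_int : IntegrableOn (fun s =>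
        2 * r s / σ s ^ 2 * ((-(φ12 a z) * φ11 a s + φ11 a z * φ12 a s) - W z * φ12 z s)
          - 2 * α s / σ s ^ 2 * ((-(φ12 a z) * φ21 a s + φ11 a z * φ22 a s) - W z * φ22 z s))
        (Set.Ioc z b) := by
      refine (((hwcomb (-(φ12 a z)) (φ11 a z)).mono_set
        (Set.Ioc_subset_Ioc hz.1 le_rfl)).sub (hwZint.const_mul (W z))).congr
        (Filter.Eventually.of_forall fun s => ?_)
      simp only [Pi.sub_apply, Pi.add_apply]
      ring
    have heqd₁ : ∀ y ∈ Set.Icc z b,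
        (-(φ12 a z) * φ11 a y + φ11 a z * φ12 a y) - W z * φ12 z y =
        ∫ s in Set.Ioc z y,
          ((-(φ12 a z) * φ21 a s + φ11 a z * φ22 a s) - W z * φ22 z s) := by
      intro y hy
      have h1 := heqψ y hy
      have h2 := huZ y hy
      have hint_a : IntegrableOn (fun s => -(φ12 a z) * φ21 a s + φ11 a z * φ22 a s)
          (Set.Ioc z y) := hints.mono_set (Set.Ioc_subset_Ioc hz.1 hy.2)
      have hint_b : IntegrableOn (fun s => W z * φ22 z s) (Set.Ioc z y) :=
        (hv22int.mono_set (Set.Ioc_subset_Ioc le_rfl hy.2)).const_mul (W z)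
      have h4 : (∫ s in Set.Ioc z y, W z * φ22 z s) =
          W z * ∫ s in Set.Ioc z y, φ22 z s := integral_const_mul _ _
      rw [h1, h2, ← h4]
      exact (integral_sub hint_a hint_b).symm
    have heqd₂ : ∀ y ∈ Set.Icc z b,
        (-(φ12 a z) * φ21 a y + φ11 a z * φ22 a y) - W z * φ22 z y =
        ∫ s in Set.Ioc z y,
          (2 * r s / σ s ^ 2 * ((-(φ12 a z) * φ11 a s + φ11 a z * φ12 a s) - W z * φ12 z s)
            - 2 * α s / σ s ^ 2 * ((-(φ12 a z) * φ21 a s + φ11 a z * φ22 a s) - W z * φ22 z s)) := by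
      intro y hy
      have h1 := heqχ y hy
      have h2 := hvZ y hy
      have hsub1 : IntegrableOn (fun s =>
          2 * r s / σ s ^ 2 * (-(φ12 a z) * φ11 a s + φ11 a z * φ12 a s)
            - 2 * α s / σ s ^ 2 * (-(φ12 a z) * φ21 a s + φ11 a z * φ22 a s)) (Set.Ioc z y) :=
        (hwcomb (-(φ12 a z)) (φ11 a z)).mono_set (Set.Ioc_subset_Ioc hz.1 hy.2)
      have hsub2 : IntegrableOn (fun s =>
          W z * (2 * r s / σ s ^ 2 * φ12 z s - 2 * α s / σ s ^ 2 * φ22 z s)) (Set.Ioc z y) :=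
        (hwZint.mono_set (Set.Ioc_subset_Ioc le_rfl hy.2)).const_mul (W z)
      have h5 : (∫ s in Set.Ioc z y,
          (2 * r s / σ s ^ 2 * ((-(φ12 a z) * φ11 a s + φ11 a z * φ12 a s) - W z * φ12 z s)
            - 2 * α s / σ s ^ 2 * ((-(φ12 a z) * φ21 a s + φ11 a z * φ22 a s) - W z * φ22 z s)))
          = (∫ s in Set.Ioc z y,
            (2 * r s / σ s ^ 2 * (-(φ12 a z) * φ11 a s + φ11 a z * φ12 a s)
              - 2 * α s / σ s ^ 2 * (-(φ12 a z) * φ21 a s + φ11 a z * φ22 a s)))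
            - ∫ s in Set.Ioc z y,
              W z * (2 * r s / σ s ^ 2 * φ12 z s - 2 * α s / σ s ^ 2 * φ22 z s) := by
        rw [← integral_sub hsub1 hsub2]
        refine setIntegral_congr_fun measurableSet_Ioc (fun s _ => ?_)
        ring
      rw [h1, h2, h5, integral_const_mul]
      ring
    have hduniq := uniq_fwd z b r α σ hz.2
      (hρint.mono_set (Set.Icc_subset_Icc hz.1 le_rfl)) n (hnmono z b hz.1 le_rfl)
      _ _ hcont1 hcont2 hwd_int heqd₁ heqd₂
    intro y hy
    have hd := (hduniq y hy).1
    linarith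
  -- integrable data
  have hgIcc : IntegrableOn (fun z => g z / σ z ^ 2) (Set.Icc a b) :=
    hgint.integrableOn_compact_subset hIab isCompact_Icc
  have hq₁cont : ContinuousOn (fun z => φ11 a z / W z) (Set.Icc a b) :=
    hφ11cont.div hWcont hWne
  have hq₂cont : ContinuousOn (fun z => φ12 a z / W z) (Set.Icc a b) :=
    hφ12cont.div hWcont hWne
  set f₁ : ℝ → ℝ := fun z => g z / σ z ^ 2 * (2 * (φ11 a z / W z)) with hf₁def
  set f₂ : ℝ → ℝ := fun z => g z / σ z ^ 2 * (2 * (φ12 a z / W z)) with hf₂def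
  have hf₁int : IntegrableOn f₁ (Set.Icc a b) := by
    obtain ⟨Q₁, hQ₁⟩ := isCompact_Icc.exists_bound_of_continuousOn
      (continuousOn_const.mul hq₁cont :
        ContinuousOn (fun z => (2:ℝ) * (φ11 a z / W z)) (Set.Icc a b))
    refine Integrable.mono' (hgIcc.abs.const_mul Q₁) ?_ ?_
    · exact ((hmg.div (hmσ.pow_const 2)).aestronglyMeasurable).mul
        ((continuousOn_const.mul hq₁cont).aestronglyMeasurable measurableSet_Icc)
    · filter_upwards [ae_restrict_mem measurableSet_Icc] with t ht
      rw [hf₁def]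
      simp only
      rw [norm_mul]
      calc ‖g t / σ t ^ 2‖ * ‖2 * (φ11 a t / W t)‖ ≤ ‖g t / σ t ^ 2‖ * Q₁ :=
            mul_le_mul_of_nonneg_left (hQ₁ t ht) (norm_nonneg _)
        _ = Q₁ * |g t / σ t ^ 2| := by rw [Real.norm_eq_abs]; ring
  have hf₂int : IntegrableOn f₂ (Set.Icc a b) := by
    obtain ⟨Q₂, hQ₂⟩ := isCompact_Icc.exists_bound_of_continuousOn
      (continuousOn_const.mul hq₂cont :
        ContinuousOn (fun z => (2:ℝ) * (φ12 a z / W z)) (Set.Icc a b))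
    refine Integrable.mono' (hgIcc.abs.const_mul Q₂) ?_ ?_
    · exact ((hmg.div (hmσ.pow_const 2)).aestronglyMeasurable).mul
        ((continuousOn_const.mul hq₂cont).aestronglyMeasurable measurableSet_Icc)
    · filter_upwards [ae_restrict_mem measurableSet_Icc] with t ht
      rw [hf₂def]
      simp only
      rw [norm_mul]
      calc ‖g t / σ t ^ 2‖ * ‖2 * (φ12 a t / W t)‖ ≤ ‖g t / σ t ^ 2‖ * Q₂ :=
            mul_le_mul_of_nonneg_left (hQ₂ t ht) (norm_nonneg _)
        _ = Q₂ * |g t / σ t ^ 2| := by rw [Real.norm_eq_abs]; ring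
  set J₁ : ℝ → ℝ := fun y => ∫ s in Set.Ioc a y, f₁ s with hJ₁def
  set J₂ : ℝ → ℝ := fun y => ∫ s in Set.Ioc a y, f₂ s with hJ₂def
  have hJ₁cont : ContinuousOn J₁ (Set.Icc a b) :=
    intervalIntegral.continuousOn_primitive hf₁int
  have hJ₂cont : ContinuousOn J₂ (Set.Icc a b) :=
    intervalIntegral.continuousOn_primitive hf₂int
  have hb0 : (0:ℝ) < b - a := by linarith
  -- rewriting the numerator
  have hNrw : ∀ ε ∈ Set.Ioo (0:ℝ) (b - a),
      (∫ z in a..(b - ε), 2 * g z / σ z ^ 2 * φ12 z (b - ε)) =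
        φ12 a (b - ε) * J₁ (b - ε) - φ11 a (b - ε) * J₂ (b - ε) := by
    intro ε hε
    have hy1 : a < b - ε := by linarith [hε.2]
    have hy2 : b - ε < b := by linarith [hε.1]
    rw [intervalIntegral.integral_of_le hy1.le]
    have hcongr : ∀ z ∈ Set.Ioc a (b - ε), 2 * g z / σ z ^ 2 * φ12 z (b - ε) =
        φ12 a (b - ε) * f₁ z - φ11 a (b - ε) * f₂ z := by
      intro z hz
      have hzm : z ∈ Set.Icc a b := ⟨hz.1.le, hz.2.trans hy2.le⟩
      have hst := hstar z hzm (b - ε) ⟨hz.2, hy2.le⟩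
      have hWz := hWne z hzm
      have hφ : φ12 z (b - ε) =
          (-(φ12 a z) * φ11 a (b - ε) + φ11 a z * φ12 a (b - ε)) / W z := by
        rw [eq_div_iff hWz]
        linear_combination hst
      rw [hφ]
      simp only [hf₁def, hf₂def]
      field_simp
      ring
    rw [setIntegral_congr_fun measurableSet_Ioc hcongr]
    have hss : Set.Ioc a (b - ε) ⊆ Set.Icc a b :=
      fun u hu => ⟨hu.1.le, hu.2.trans hy2.le⟩
    have hi1 : IntegrableOn (fun z => φ12 a (b - ε) * f₁ z) (Set.Ioc a (b - ε)) :=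
      (hf₁int.mono_set hss).const_mul _
    have hi2 : IntegrableOn (fun z => φ11 a (b - ε) * f₂ z) (Set.Ioc a (b - ε)) :=
      (hf₂int.mono_set hss).const_mul _
    rw [integral_sub hi1 hi2, integral_const_mul, integral_const_mul]
  have hmemIoo : Set.Ioo (0:ℝ) (b - a) ∈ nhdsWithin (0:ℝ) (Set.Ioi 0) :=
    Ioo_mem_nhdsGT_of_mem ⟨le_rfl, hb0⟩
  have hyTend : Filter.Tendsto (fun ε : ℝ => b - ε) (nhdsWithin 0 (Set.Ioi 0))
      (nhdsWithin b (Set.Icc a b)) := by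
    rw [tendsto_nhdsWithin_iff]
    constructor
    · have h1 : Filter.Tendsto (fun ε : ℝ => b - ε) (nhds 0) (nhds (b - 0)) :=
        (continuous_const.sub continuous_id).tendsto 0
      simpa using h1.mono_left nhdsWithin_le_nhds
    · filter_upwards [hmemIoo] with ε hε
      exact ⟨by linarith [hε.2], by linarith [hε.1]⟩
  have hBtend : Filter.Tendsto (fun ε : ℝ => φ12 a (b - ε))
      (nhdsWithin 0 (Set.Ioi 0)) (nhds 0) := by
    have h1 := ((hφ12cont b ⟨hab.le, le_rfl⟩).tendsto).comp hyTend
    rw [h0] at h1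
    exact h1
  have hAtend : Filter.Tendsto (fun ε : ℝ => φ11 a (b - ε))
      (nhdsWithin 0 (Set.Ioi 0)) (nhds (φ11 a b)) :=
    ((hφ11cont b ⟨hab.le, le_rfl⟩).tendsto).comp hyTend
  have hJ₁tend : Filter.Tendsto (fun ε : ℝ => J₁ (b - ε))
      (nhdsWithin 0 (Set.Ioi 0)) (nhds (J₁ b)) :=
    ((hJ₁cont b ⟨hab.le, le_rfl⟩).tendsto).comp hyTend
  have hJ₂tend : Filter.Tendsto (fun ε : ℝ => J₂ (b - ε))
      (nhdsWithin 0 (Set.Ioi 0)) (nhds (J₂ b)) :=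
    ((hJ₂cont b ⟨hab.le, le_rfl⟩).tendsto).comp hyTend
  have hNtend : Filter.Tendsto
      (fun ε : ℝ => ∫ z in a..(b - ε), 2 * g z / σ z ^ 2 * φ12 z (b - ε))
      (nhdsWithin 0 (Set.Ioi 0)) (nhds (0 * J₁ b - φ11 a b * J₂ b)) := by
    refine Filter.Tendsto.congr' ?_ ((hBtend.mul hJ₁tend).sub (hAtend.mul hJ₂tend))
    filter_upwards [hmemIoo] with ε hε
    exact (hNrw ε hε).symm
  have hgrw : (∫ z in a..b, g z * φ12 z b / σ z ^ 2) = -(φ11 a b) / 2 * J₂ b := by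
    rw [intervalIntegral.integral_of_le hab.le]
    have hcongr : ∀ z ∈ Set.Ioc a b, g z * φ12 z b / σ z ^ 2 =
        -(φ11 a b) / 2 * f₂ z := by
      intro z hz
      have hzm : z ∈ Set.Icc a b := ⟨hz.1.le, hz.2⟩
      have hst := hstar z hzm b ⟨hz.2, le_rfl⟩
      rw [h0] at hst
      have hWz := hWne z hzm
      have hφ : φ12 z b = -(φ12 a z) * φ11 a b / W z := by
        rw [eq_div_iff hWz]
        linear_combination hst
      have hσne : σ z ≠ 0 := ne_of_gt (hσpos z (hmem z hzm))
      rw [hφ]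
      simp only [hf₂def]
      field_simp
    rw [setIntegral_congr_fun measurableSet_Ioc hcongr, integral_const_mul]
  have hL : 0 < 0 * J₁ b - φ11 a b * J₂ b := by
    rw [hgrw] at hgpos
    nlinarith [hgpos]
  have hDpos : ∀ᶠ ε in nhdsWithin (0:ℝ) (Set.Ioi 0), 0 < φ12 a (b - ε) := by
    filter_upwards [hmemIoo] with ε hε
    exact hpos (b - ε) ⟨by linarith [hε.2], by linarith [hε.1]⟩
  have hBtend' : Filter.Tendsto (fun ε : ℝ => φ12 a (b - ε))
      (nhdsWithin 0 (Set.Ioi 0)) (nhdsWithin 0 (Set.Ioi 0)) := by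
    rw [tendsto_nhdsWithin_iff]
    exact ⟨hBtend, hDpos⟩
  have hinv : Filter.Tendsto (fun ε : ℝ => (φ12 a (b - ε))⁻¹)
      (nhdsWithin 0 (Set.Ioi 0)) Filter.atTop := by
    have := hBtend'.inv_tendsto_nhdsGT_zero
    simpa [Pi.inv_def] using this
  have hquot : Filter.Tendsto (fun ε : ℝ =>
      (∫ z in a..(b - ε), 2 * g z / σ z ^ 2 * φ12 z (b - ε)) / φ12 a (b - ε))
      (nhdsWithin 0 (Set.Ioi 0)) Filter.atTop := by
    simp only [div_eq_mul_inv]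
    exact Filter.Tendsto.pos_mul_atTop hL hNtend hinv
  have hmul := hquot.atTop_mul_const (hpos x hx)
  have hfin := Filter.tendsto_atTop_add_const_right _
    (-(∫ z in a..x, 2 * g z / σ z ^ 2 * φ12 z x)) hmul
  simpa [sub_eq_add_neg] using hfin
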